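/- With the setup of the kernel gradient flow R² lemma, for every t with R²(t) < 1: s_min(K(t)) ≤ (dR²/dt)(t) · (1/2) · 1/(1 - R²(t)) ≤ s_max(K(t)). -/

import Mathlib

open Matrix

/-- Rayleigh quotient bounds for a real symmetric matrix. -/
lemma rayleigh_bounds {n : ℕ} [NeZero n] {A : Matrix (Fin n) (Fin n) ℝ}
    (hA : A.IsHermitian) (v : Fin n → ℝ) (hv : v ⬝ᵥ v > 0) :
    (⨅ i, hA.eigenvalues i) * (v ⬝ᵥ v) ≤ v ⬝ᵥ A *ᵥ v ∧
      v ⬝ᵥ A *ᵥ v ≤ (⨆ i, hA.eigenvalues i) * (v ⬝ᵥ v) := by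
  set U : Matrix (Fin n) (Fin n) ℝ := (hA.eigenvectorUnitary : Matrix (Fin n) (Fin n) ℝ)
  set w : Fin n → ℝ := star U *ᵥ v with hw
  have hUU : U * star U = 1 := (Matrix.mem_unitaryGroup_iff).mp hA.eigenvectorUnitary.2
  have hstar : star U = Uᵀ := by
    ext i j
    simp [Matrix.star_apply]
  have hUUt : U * Uᵀ = 1 := by rw [← hstar]; exact hUU
  have hww : w ⬝ᵥ w = v ⬝ᵥ v := by
    have h1 : w ⬝ᵥ (star U *ᵥ v) = (w ᵥ* star U) ⬝ᵥ v := Matrix.dotProduct_mulVec _ _ _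
    have h2 : w ᵥ* star U = U *ᵥ w := by
      rw [hstar, ← Matrix.mulVec_transpose, Matrix.transpose_transpose]
    have h3 : U *ᵥ w = v := by
      rw [hw, hstar, Matrix.mulVec_mulVec, hUUt, Matrix.one_mulVec]
    rw [← hw] at h1
    rw [h1, h2, h3]
  have hQ : v ⬝ᵥ A *ᵥ v = ∑ i, hA.eigenvalues i * (w i)^2 := by
    conv_lhs => rw [hA.spectral_theorem, Unitary.conjStarAlgAut_apply]
    rw [← Matrix.mulVec_mulVec, ← Matrix.mulVec_mulVec, Matrix.dotProduct_mulVec]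
    have hvU : v ᵥ* U = w := by
      rw [← Matrix.mulVec_transpose, hw, hstar]
    rw [hvU]
    rw [show (star (U : Matrix (Fin n) (Fin n) ℝ)) *ᵥ v = w from (hw).symm]
    simp only [Matrix.mulVec_diagonal, dotProduct, Function.comp_apply,
      RCLike.ofReal_real_eq_id, id_eq]
    exact Finset.sum_congr rfl fun i _ => by ring
  have hwn : w ⬝ᵥ w = ∑ i, (w i)^2 := by simp [dotProduct, sq]
  constructor
  · rw [hQ, ← hww, hwn, Finset.mul_sum]
    apply Finset.sum_le_sum
    intro i _
    exact mul_le_mul_of_nonneg_right (ciInf_le (Set.Finite.bddBelow (Set.finite_range _)) i)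
      (sq_nonneg _)
  · rw [hQ, ← hww, hwn, Finset.mul_sum]
    apply Finset.sum_le_sum
    intro i _
    exact mul_le_mul_of_nonneg_right (le_ciSup (Set.Finite.bddAbove (Set.finite_range _)) i)
      (sq_nonneg _)

theorem r2_derivative_eigen_bounds {n : ℕ} (y : Fin n → ℝ) (ybar : ℝ)
    (hybar : ybar = (1 / n) * ∑ i, y i)
    (hy : (∑ i, (y i - ybar) ^ 2) > 0)
    (K : ℝ → Matrix (Fin n) (Fin n) ℝ)
    (hK : ∀ t, (K t).IsHermitian) (hKpsd : ∀ t, (K t).PosSemidef)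
    (f : ℝ → (Fin n → ℝ))
    (hder : ∀ t, HasDerivAt f ((K t) *ᵥ (y - f t)) t)
    (t : ℝ)
    (hR2 : 1 - (∑ i, (y i - f t i) ^ 2) / (∑ i, (y i - ybar) ^ 2) < 1)
    (hres : y - f t ≠ 0) :
    (⨅ i, (hK t).eigenvalues i) ≤
        (2 * ((y - f t) ⬝ᵥ (K t) *ᵥ (y - f t)) / (∑ i, (y i - ybar) ^ 2)) * (1 / 2) *
          (1 / (1 - (1 - (∑ i, (y i - f t i) ^ 2) / (∑ i, (y i - ybar) ^ 2)))) ∧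
      (2 * ((y - f t) ⬝ᵥ (K t) *ᵥ (y - f t)) / (∑ i, (y i - ybar) ^ 2)) * (1 / 2) *
          (1 / (1 - (1 - (∑ i, (y i - f t i) ^ 2) / (∑ i, (y i - ybar) ^ 2)))) ≤
        ⨆ i, (hK t).eigenvalues i := by
  set v : Fin n → ℝ := y - f t with hvdef
  have hn : n ≠ 0 := by
    rintro rfl
    simp at hy
  haveI : NeZero n := ⟨hn⟩
  have hN : (∑ i, (y i - f t i) ^ 2) = v ⬝ᵥ v := by
    simp [dotProduct, hvdef, sq]
  have hvv : v ⬝ᵥ v > 0 := by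
    rcases Function.ne_iff.mp hres with ⟨i, hi⟩
    have : (0:ℝ) < ∑ j, v j * v j := by
      apply Finset.sum_pos' (fun j _ => mul_self_nonneg _)
      exact ⟨i, Finset.mem_univ i, mul_self_pos.mpr hi⟩
    simpa [dotProduct] using this
  have hS : (∑ i, (y i - ybar) ^ 2) > 0 := hy
  have key : (2 * (v ⬝ᵥ (K t) *ᵥ v) / (∑ i, (y i - ybar) ^ 2)) * (1 / 2) *
      (1 / (1 - (1 - (∑ i, (y i - f t i) ^ 2) / (∑ i, (y i - ybar) ^ 2)))) =
      (v ⬝ᵥ (K t) *ᵥ v) / (v ⬝ᵥ v) := by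
    rw [hN, sub_sub_cancel]
    field_simp
  rw [key]
  obtain ⟨h1, h2⟩ := rayleigh_bounds (hK t) v hvv
  constructor
  · rw [le_div_iff₀ hvv]; exact h1
  · rw [div_le_iff₀ hvv]; exact h2
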